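/- Let n ≥ 1, z ∈ ℂ∖ℝ, and let Ω ⊆ ℂ be open with z ∈ Ω and conj(z) ∈ Ω. Let ψ : ℝ³ × Ω → Mₙ(ℂ) be pointwise invertible, continuously differentiable in (x,u,v), holomorphic in λ ∈ Ω, and satisfy the reality condition ψ(p, conj(λ))* ψ(p, λ) = I whenever λ and conj(λ) lie in Ω. Let A, B : ℝ³ → Mₙ(ℂ) satisfy λ∂_xψ − ∂_uψ = Aψ and λ∂_vψ − ∂_xψ = Bψ for all λ ∈ Ω. Let π : ℝ³ → Mₙ(ℂ) be a continuously differentiable family of Hermitian projections for which there exist A₀, B₀ : ℝ³ → Mₙ(ℂ) with λ∂_x g_{z,π(p)}(λ) − ∂_u g_{z,π(p)}(λ) = A₀(p)·g_{z,π(p)}(λ) and λ∂_v g_{z,π(p)}(λ) − ∂_x g_{z,π(p)}(λ) = B₀(p)·g_{z,π(p)}(λ) for all λ ∈ ℂ∖{z}. Let π̃ : ℝ³ → Mₙ(ℂ) be a continuously differentiable family of Hermitian projections such that for every p the range of π̃(p) is the image of the range of π(p) under ψ(p, z). Then ψ₁(p, λ) := g_{z,π̃(p)}(λ)·ψ(p,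 λ) satisfies λ∂_xψ₁ − ∂_uψ₁ = (A + (conj(z) − z)∂_xπ̃)·ψ₁ and λ∂_vψ₁ − ∂_xψ₁ = (B + (conj(z) − z)∂_vπ̃)·ψ₁ for all λ ∈ Ω∖{z}. -/

import Mathlib

open Matrix Complex Filter

noncomputable section

/-- A Hermitian projection of ℂⁿ: a matrix with π* = π and π² = π. -/
def IsHermitianProj {n : ℕ} (π : Matrix (Fin n) (Fin n) ℂ) : Prop :=
  πᴴ = π ∧ π * π = π

/-- The simple element g_{z,π}(λ) = I + ((z - conj z)/(λ - z))·(I - π). -/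
def simpleElt {n : ℕ} (z : ℂ) (π : Matrix (Fin n) (Fin n) ℂ) (lam : ℂ) :
    Matrix (Fin n) (Fin n) ℂ :=
  1 + ((z - (starRingEnd ℂ) z) / (lam - z)) • (1 - π)

/-- The range of the linear map defined by a matrix. -/
def mrange {n m : ℕ} (A : Matrix (Fin n) (Fin m) ℂ) :
    Submodule ℂ (EuclideanSpace ℂ (Fin n)) :=
  LinearMap.range (Matrix.toEuclideanLin A)

/-- Entrywise partial derivative ∂_x of a matrix-valued map on ℝ³, p = (x,u,v). -/
def pdx {m k : Type*} (F : ℝ × ℝ × ℝ → Matrix m k ℂ) (p : ℝ × ℝ × ℝ) : Matrix m k ℂ :=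
  fun i j => deriv (fun s => F (s, p.2.1, p.2.2) i j) p.1

/-- Entrywise partial derivative ∂_u of a matrix-valued map on ℝ³, p = (x,u,v). -/
def pdu {m k : Type*} (F : ℝ × ℝ × ℝ → Matrix m k ℂ) (p : ℝ × ℝ × ℝ) : Matrix m k ℂ :=
  fun i j => deriv (fun s => F (p.1, s, p.2.2) i j) p.2.1

/-- Entrywise partial derivative ∂_v of a matrix-valued map on ℝ³, p = (x,u,v). -/
def pdv {m k : Type*} (F : ℝ × ℝ × ℝ → Matrix m k ℂ) (p : ℝ × ℝ × ℝ) : Matrix m k ℂ :=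
  fun i j => deriv (fun s => F (p.1, p.2.1, s) i j) p.2.2


namespace BTaux

lemma diffAt_line1 {f : ℝ × ℝ × ℝ → ℂ} (hf : ContDiff ℝ 1 f) (a b t : ℝ) :
    DifferentiableAt ℝ (fun s => f (s, a, b)) t := by
  have h1 : Differentiable ℝ (fun s : ℝ => ((s, a, b) : ℝ × ℝ × ℝ)) := by fun_prop
  exact ((hf.differentiable one_ne_zero).comp h1).differentiableAt

lemma diffAt_line2 {f : ℝ × ℝ × ℝ → ℂ} (hf : ContDiff ℝ 1 f) (a b t : ℝ) :
    DifferentiableAt ℝ (fun s => f (a, s, b)) t := by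
  have h1 : Differentiable ℝ (fun s : ℝ => ((a, s, b) : ℝ × ℝ × ℝ)) := by fun_prop
  exact ((hf.differentiable one_ne_zero).comp h1).differentiableAt

lemma diffAt_line3 {f : ℝ × ℝ × ℝ → ℂ} (hf : ContDiff ℝ 1 f) (a b t : ℝ) :
    DifferentiableAt ℝ (fun s => f (a, b, s)) t := by
  have h1 : Differentiable ℝ (fun s : ℝ => ((a, b, s) : ℝ × ℝ × ℝ)) := by fun_prop
  exact ((hf.differentiable one_ne_zero).comp h1).differentiableAt

end BTaux

namespace BTaux

variable {n : ℕ}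

local notation "M" => Matrix (Fin n) (Fin n) ℂ

def md (f : ℝ → Matrix (Fin n) (Fin n) ℂ) (t : ℝ) : Matrix (Fin n) (Fin n) ℂ :=
  fun i j => deriv (fun s => f s i j) t

lemma md_const (C : Matrix (Fin n) (Fin n) ℂ) (t : ℝ) : md (fun _ => C) t = 0 := by
  funext i j
  simp [md]

lemma md_conjT (f : ℝ → Matrix (Fin n) (Fin n) ℂ) (t : ℝ) :
    md (fun s => (f s)ᴴ) t = (md f t)ᴴ := by
  funext i j
  simp only [md, Matrix.conjTranspose_apply]
  exact deriv.star

lemma md_congr {f g : ℝ → Matrix (Fin n) (Fin n) ℂ} (h : ∀ s, f s = g s) (t : ℝ) :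
    md f t = md g t := by
  have : f = g := funext h
  rw [this]

lemma diff_mul_entry {f g : ℝ → Matrix (Fin n) (Fin n) ℂ} {t : ℝ}
    (hf : ∀ i j, DifferentiableAt ℝ (fun s => f s i j) t)
    (hg : ∀ i j, DifferentiableAt ℝ (fun s => g s i j) t) :
    ∀ i j, DifferentiableAt ℝ (fun s => (f s * g s) i j) t := by
  intro i j
  simp only [Matrix.mul_apply]
  exact DifferentiableAt.fun_sum fun k _ => (hf i k).mul (hg k j)

lemma md_mul {f g : ℝ → Matrix (Fin n) (Fin n) ℂ} {t : ℝ}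
    (hf : ∀ i j, DifferentiableAt ℝ (fun s => f s i j) t)
    (hg : ∀ i j, DifferentiableAt ℝ (fun s => g s i j) t) :
    md (fun s => f s * g s) t = md f t * g t + f t * md g t := by
  funext i j
  simp only [md, Matrix.mul_apply, Matrix.add_apply]
  calc deriv (fun s => ∑ k, f s i k * g s k j) t
      = ∑ k, deriv (fun s => f s i k * g s k j) t :=
        deriv_fun_sum fun k _ => (hf i k).mul (hg k j)
    _ = ∑ k, (deriv (fun s => f s i k) t * g t k j + f t i k * deriv (fun s => g s k j) t) :=
        Finset.sum_congr rfl fun k _ => deriv_fun_mul (hf i k) (hg k j)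
    _ = _ := by rw [Finset.sum_add_distrib]

lemma md_simpleElt (z mu : ℂ) (f : ℝ → Matrix (Fin n) (Fin n) ℂ) (t : ℝ) :
    md (fun s => simpleElt z (f s) mu) t
      = (-((z - (starRingEnd ℂ) z) / (mu - z))) • md f t := by
  funext i j
  simp only [md, simpleElt, Matrix.add_apply, Matrix.smul_apply, Matrix.sub_apply,
    smul_eq_mul]
  rw [deriv_const_add, deriv_const_mul_field, deriv_const_sub]
  ring

lemma tl_mul (A B : Matrix (Fin n) (Fin n) ℂ) :
    Matrix.toEuclideanLin (A * B)
      = (Matrix.toEuclideanLin A).comp (Matrix.toEuclideanLin B) := by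
  refine LinearMap.ext fun v => ?_
  simp [Matrix.toEuclideanLin_apply, Matrix.mulVec_mulVec]

lemma mrange_mul (A B : Matrix (Fin n) (Fin n) ℂ) :
    mrange (A * B) = (mrange B).map (Matrix.toEuclideanLin A) := by
  rw [mrange, tl_mul, LinearMap.range_comp]
  rfl

lemma unit_cancel_left {U X : Matrix (Fin n) (Fin n) ℂ} (h : IsUnit U) (hx : U * X = 0) :
    X = 0 := by
  obtain ⟨u, rfl⟩ := h
  calc X = ↑u⁻¹ * (↑u * X) := by rw [← Matrix.mul_assoc, Units.inv_mul, Matrix.one_mul]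
    _ = 0 := by rw [hx, Matrix.mul_zero]

lemma unit_cancel_right {U X : Matrix (Fin n) (Fin n) ℂ} (h : IsUnit U) (hx : X * U = 0) :
    X = 0 := by
  obtain ⟨u, rfl⟩ := h
  calc X = (X * ↑u) * ↑u⁻¹ := by rw [Matrix.mul_assoc, Units.mul_inv, Matrix.mul_one]
    _ = 0 := by rw [hx, Matrix.zero_mul]

lemma isUnit_conjT {U : Matrix (Fin n) (Fin n) ℂ} (h : IsUnit U) : IsUnit Uᴴ := by
  exact (Matrix.isUnit_conjTranspose U).2 h

-- fixing lemma: if mrange P = mrange F and P*P = P then P * F = F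
lemma proj_fix {P F : Matrix (Fin n) (Fin n) ℂ} (hP : P * P = P)
    (h : mrange F ≤ mrange P) : P * F = F := by
  apply Matrix.toEuclideanLin.injective
  refine LinearMap.ext fun v => ?_
  have hv : Matrix.toEuclideanLin F v ∈ mrange P :=
    h (LinearMap.mem_range_self _ v)
  obtain ⟨u, hu⟩ := hv
  rw [tl_mul]
  simp only [LinearMap.comp_apply]
  rw [← hu, ← LinearMap.comp_apply, ← tl_mul, hP]

-- if X * F = 0 and mrange P ≤ mrange F then X * P = 0
lemma range_kill {P F X : Matrix (Fin n) (Fin n) ℂ} (h : mrange P ≤ mrange F)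
    (hx : X * F = 0) : X * P = 0 := by
  apply Matrix.toEuclideanLin.injective
  refine LinearMap.ext fun v => ?_
  have hv : Matrix.toEuclideanLin P v ∈ mrange F := h (LinearMap.mem_range_self _ v)
  obtain ⟨u, hu⟩ := hv
  rw [tl_mul]
  simp only [LinearMap.comp_apply, map_zero, LinearMap.zero_apply]
  rw [← hu, ← LinearMap.comp_apply, ← tl_mul, hx]
  simp

-- extract A₀ from the two specialized equations
lemma alg_A0 {E1 E2 Pi A0 : M} {z w : ℂ}
    (eqw : w • E1 - E2 = A0 * Pi)
    (eq2 : (2*z - w) • ((-1 : ℂ) • E1) - (-1 : ℂ) • E2 = A0 * (1 + (1 - Pi))) :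
    A0 = (w - z) • E1 := by
  have hsum : A0 * Pi + A0 * (1 + (1 - Pi))
      = (w • E1 - E2) + ((2*z - w) • ((-1 : ℂ) • E1) - (-1 : ℂ) • E2) := by
    rw [eqw, eq2]
  have h2 : (2:ℂ) • A0 = (2:ℂ) • ((w - z) • E1) := by
    have hL : A0 * Pi + A0 * (1 + (1 - Pi)) = (2:ℂ) • A0 := by
      simp only [Matrix.mul_add, Matrix.mul_sub, Matrix.mul_one]
      module
    have hR : (w • E1 - E2) + ((2*z - w) • ((-1 : ℂ) • E1) - (-1 : ℂ) • E2)
        = (2:ℂ) • ((w - z) • E1) := by module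
    rw [← hL, hsum, hR]
  exact smul_right_injective _ (two_ne_zero) h2

lemma alg_a {E1 E2 Pi A0 : M} {z w : ℂ}
    (eqw : w • E1 - E2 = A0 * Pi)
    (hA0 : A0 = (w - z) • E1)
    (hproj : E1 * Pi + Pi * E1 = E1) :
    z • E1 - E2 = (z - w) • (Pi * E1) := by
  have hπE : Pi * E1 = E1 - E1 * Pi := eq_sub_iff_add_eq.2 (by rw [add_comm]; exact hproj)
  have hE2 : E2 = w • E1 - (w - z) • (E1 * Pi) := by
    rw [hA0] at eqw
    rw [smul_mul_assoc] at eqw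
    rw [← eqw]; abel
  rw [hπE, hE2]; module

lemma alg_combo {X1 X2 E1 E2 Pi Ψz A : M} {z w : ℂ}
    (heqz : z • X1 - X2 = A * Ψz)
    (ha : z • E1 - E2 = (z - w) • (Pi * E1)) :
    z • (X1 * Pi + Ψz * E1) - (X2 * Pi + Ψz * E2)
      = A * (Ψz * Pi) + (z - w) • ((Ψz * Pi) * E1) := by
  have h1 : z • (X1 * Pi + Ψz * E1) - (X2 * Pi + Ψz * E2)
      = (z • X1 - X2) * Pi + Ψz * (z • E1 - E2) := by
    simp only [Matrix.sub_mul, Matrix.mul_sub, smul_mul_assoc, mul_smul_comm, smul_add,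
      Matrix.add_mul, Matrix.mul_add]
    abel
  rw [h1, heqz, ha]
  simp only [mul_smul_comm, Matrix.mul_assoc]

lemma alg_star {D1 D2 F P M1 M2 A E1 : M} {z w : ℂ}
    (hfd1 : D1 * F + P * M1 = M1) (hfd2 : D2 * F + P * M2 = M2)
    (hcombo : z • M1 - M2 = A * F + (z - w) • (F * E1))
    (hPF : P * F = F) :
    (z • D1 - D2 - (1 - P) * A) * F = 0 := by
  have h1 : D1 * F = M1 - P * M1 := eq_sub_iff_add_eq.2 hfd1
  have h2 : D2 * F = M2 - P * M2 := eq_sub_iff_add_eq.2 hfd2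
  have h4 : A * F = z • M1 - M2 - (z - w) • (F * E1) := by rw [hcombo]; abel
  have hPFE : P * (F * E1) = F * E1 := by rw [← Matrix.mul_assoc, hPF]
  have h3 : (z • D1 - D2 - (1 - P) * A) * F
      = z • (D1 * F) - D2 * F - (A * F - P * (A * F)) := by
    simp only [Matrix.sub_mul, smul_mul_assoc, Matrix.one_mul, Matrix.mul_assoc]
  rw [h3, h1, h2, h4]
  simp only [Matrix.mul_sub, mul_smul_comm, hPFE]
  module

lemma alg_E1 {D1 D2 P A : M} {z w : ℂ}
    (hstar : (z • D1 - D2 - (1 - P) * A) * P = 0)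
    (hstar2 : (w • D1 - D2 + P * A) * (1 - P) = 0) :
    (w - z) • (D1 * (1 - P)) + z • D1 - D2 - A * P + P * A = 0 := by
  have hsum : (z • D1 - D2 - (1 - P) * A) * P + (w • D1 - D2 + P * A) * (1 - P) = 0 := by
    rw [hstar, hstar2]; abel
  calc (w - z) • (D1 * (1 - P)) + z • D1 - D2 - A * P + P * A
      = (z • D1 - D2 - (1 - P) * A) * P + (w • D1 - D2 + P * A) * (1 - P) := by
        simp only [Matrix.sub_mul, Matrix.add_mul, Matrix.mul_sub, Matrix.mul_one,
          Matrix.one_mul, smul_mul_assoc, Matrix.mul_assoc]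
        module
    _ = 0 := hsum

lemma alg_final {D1 D2 P A : M} {z w lam : ℂ} (hlamz : lam - z ≠ 0)
    (hE1 : (w - z) • (D1 * (1 - P)) + z • D1 - D2 - A * P + P * A = 0) :
    (-(lam * ((z - w)/(lam - z)))) • D1 + ((z - w)/(lam - z)) • D2
        + (1 + ((z - w)/(lam - z)) • (1 - P)) * A
      = (A + (w - z) • D1) * (1 + ((z - w)/(lam - z)) • (1 - P)) := by
  set c : ℂ := (z - w)/(lam - z) with hc
  have hlc : lam * c = (z - w) + c * z := by
    have h1 : c * (lam - z) = z - w := div_mul_cancel₀ _ hlamz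
    rw [← h1]; ring
  have key : (A + (w - z) • D1) * (1 + c • (1 - P))
      - ((-(lam * c)) • D1 + c • D2 + (1 + c • (1 - P)) * A)
      = c • ((w - z) • (D1 * (1 - P)) + z • D1 - D2 - A * P + P * A) := by
    rw [hlc]
    simp only [Matrix.add_mul, Matrix.mul_add, Matrix.mul_sub, Matrix.sub_mul,
      Matrix.mul_one, Matrix.one_mul, smul_mul_assoc, mul_smul_comm, smul_add, smul_sub,
      smul_smul]
    module
  rw [hE1, smul_zero, sub_eq_zero] at key
  exact key.symm

lemma alg_AH {Y1 Y2 X1 X2 Ψw' Ψz A : M} {z : ℂ}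
    (hr1 : Y1 * Ψz + Ψw' * X1 = 0) (hr2 : Y2 * Ψz + Ψw' * X2 = 0)
    (hherm : z • Y1 - Y2 = Ψw' * Aᴴ) (heqz : z • X1 - X2 = A * Ψz) :
    Ψw' * ((Aᴴ + A) * Ψz) = 0 := by
  have e1 : Y1 * Ψz = -(Ψw' * X1) := eq_neg_of_add_eq_zero_left hr1
  have e2 : Y2 * Ψz = -(Ψw' * X2) := eq_neg_of_add_eq_zero_left hr2
  have h3 : Ψw' * (Aᴴ * Ψz) = (z • Y1 - Y2) * Ψz := by
    rw [hherm, Matrix.mul_assoc]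
  have h4 : (z • Y1 - Y2) * Ψz = -(Ψw' * (A * Ψz)) := by
    rw [Matrix.sub_mul, smul_mul_assoc, e1, e2, ← heqz]
    simp only [Matrix.mul_sub, mul_smul_comm]
    module
  calc Ψw' * ((Aᴴ + A) * Ψz)
      = Ψw' * (Aᴴ * Ψz) + Ψw' * (A * Ψz) := by
        simp only [Matrix.add_mul, Matrix.mul_add]
    _ = 0 := by rw [h3, h4]; abel

lemma alg_star2 {D1 D2 P A : M} {z w : ℂ} (hsz : star z = w)
    (hstar : (z • D1 - D2 - (1 - P) * A) * P = 0)
    (hD1H : D1ᴴ = D1) (hD2H : D2ᴴ = D2) (hPH : Pᴴ = P) (hAH : Aᴴ = -A)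
    (hproj1 : D1 * P + P * D1 = D1) (hproj2 : D2 * P + P * D2 = D2) :
    (w • D1 - D2 + P * A) * (1 - P) = 0 := by
  have hp1 : P * D1 = D1 - D1 * P := eq_sub_iff_add_eq.2 (by rw [add_comm]; exact hproj1)
  have hp2 : P * D2 = D2 - D2 * P := eq_sub_iff_add_eq.2 (by rw [add_comm]; exact hproj2)
  have h0 := congrArg Matrix.conjTranspose hstar
  rw [Matrix.conjTranspose_mul, Matrix.conjTranspose_zero, Matrix.conjTranspose_sub,
    Matrix.conjTranspose_sub, Matrix.conjTranspose_smul, Matrix.conjTranspose_mul,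
    Matrix.conjTranspose_sub, Matrix.conjTranspose_one, hD1H, hD2H, hPH, hAH, hsz] at h0
  rw [Matrix.neg_mul, sub_neg_eq_add] at h0
  calc (w • D1 - D2 + P * A) * (1 - P)
      = P * (w • D1 - D2 + A * (1 - P)) := by
        simp only [Matrix.add_mul, Matrix.sub_mul, Matrix.mul_add, Matrix.mul_sub,
          Matrix.mul_one, Matrix.one_mul, smul_mul_assoc, mul_smul_comm, hp1, hp2,
          Matrix.mul_assoc]
        module
    _ = 0 := h0

lemma half (z lam : ℂ) (hz : z.im ≠ 0) (hlam : lam ≠ z)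
    (γ₁ γ₂ : ℝ → ℝ × ℝ × ℝ) (t₁ t₂ : ℝ) (p : ℝ × ℝ × ℝ)
    (h₁ : γ₁ t₁ = p) (h₂ : γ₂ t₂ = p)
    (ψ : ℝ × ℝ × ℝ → ℂ → Matrix (Fin n) (Fin n) ℂ)
    (π πt : ℝ × ℝ × ℝ → Matrix (Fin n) (Fin n) ℂ)
    (A A₀ : Matrix (Fin n) (Fin n) ℂ)
    (hdlam1 : ∀ i j, DifferentiableAt ℝ (fun s => ψ (γ₁ s) lam i j) t₁)
    (hdlam2 : ∀ i j, DifferentiableAt ℝ (fun s => ψ (γ₂ s) lam i j) t₂)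
    (hdz1 : ∀ i j, DifferentiableAt ℝ (fun s => ψ (γ₁ s) z i j) t₁)
    (hdz2 : ∀ i j, DifferentiableAt ℝ (fun s => ψ (γ₂ s) z i j) t₂)
    (hdw1 : ∀ i j, DifferentiableAt ℝ (fun s => ψ (γ₁ s) ((starRingEnd ℂ) z) i j) t₁)
    (hdw2 : ∀ i j, DifferentiableAt ℝ (fun s => ψ (γ₂ s) ((starRingEnd ℂ) z) i j) t₂)
    (hdπ1 : ∀ i j, DifferentiableAt ℝ (fun s => π (γ₁ s) i j) t₁)
    (hdπ2 : ∀ i j, DifferentiableAt ℝ (fun s => π (γ₂ s) i j) t₂)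
    (hdπt1 : ∀ i j, DifferentiableAt ℝ (fun s => πt (γ₁ s) i j) t₁)
    (hdπt2 : ∀ i j, DifferentiableAt ℝ (fun s => πt (γ₂ s) i j) t₂)
    (heqlam : lam • md (fun s => ψ (γ₁ s) lam) t₁ - md (fun s => ψ (γ₂ s) lam) t₂
        = A * ψ p lam)
    (heqz : z • md (fun s => ψ (γ₁ s) z) t₁ - md (fun s => ψ (γ₂ s) z) t₂ = A * ψ p z)
    (heqw : (starRingEnd ℂ) z • md (fun s => ψ (γ₁ s) ((starRingEnd ℂ) z)) t₁
        - md (fun s => ψ (γ₂ s) ((starRingEnd ℂ) z)) t₂ = A * ψ p ((starRingEnd ℂ) z))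
    (h0 : ∀ mu : ℂ, mu ≠ z →
      mu • md (fun s => simpleElt z (π (γ₁ s)) mu) t₁
        - md (fun s => simpleElt z (π (γ₂ s)) mu) t₂ = A₀ * simpleElt z (π p) mu)
    (hππ : ∀ q, π q * π q = π q)
    (hπtP : ∀ q, πt q * πt q = πt q)
    (hπtH : ∀ q, (πt q)ᴴ = πt q)
    (hfix : ∀ q, πt q * (ψ q z * π q) = ψ q z * π q)
    (hran : ∀ X : Matrix (Fin n) (Fin n) ℂ, X * (ψ p z * π p) = 0 → X * πt p = 0)
    (hreal : ∀ q, (ψ q ((starRingEnd ℂ) z))ᴴ * ψ q z = 1)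
    (hinvz : IsUnit (ψ p z)) (hinvw : IsUnit (ψ p ((starRingEnd ℂ) z))) :
    lam • md (fun s => simpleElt z (πt (γ₁ s)) lam * ψ (γ₁ s) lam) t₁
        - md (fun s => simpleElt z (πt (γ₂ s)) lam * ψ (γ₂ s) lam) t₂
      = (A + ((starRingEnd ℂ) z - z) • md (fun s => πt (γ₁ s)) t₁)
          * (simpleElt z (πt p) lam * ψ p lam) := by
  set w := (starRingEnd ℂ) z with hw
  have hzw : z - w ≠ 0 := by
    rw [hw, Complex.sub_conj]
    refine mul_ne_zero ?_ Complex.I_ne_zero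
    exact Complex.ofReal_ne_zero.2 (mul_ne_zero two_ne_zero hz)
  have hwz : w ≠ z := fun h => hzw (by rw [h]; ring)
  have hwz0 : w - z ≠ 0 := sub_ne_zero.2 hwz
  have hlamz : lam - z ≠ 0 := sub_ne_zero.2 hlam
  have hsz : star z = w := by rw [hw, starRingEnd_apply]
  have hsw : star w = z := by rw [hw, starRingEnd_apply, star_star]
  have hcw : (z - w)/(w - z) = -1 := by rw [div_eq_iff hwz0]; ring
  have hc2 : (z - w)/(2*z - w - z) = 1 := by
    rw [show 2*z - w - z = z - w by ring, div_self hzw]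
  have hmdπ1 : ∀ mu : ℂ, md (fun s => simpleElt z (π (γ₁ s)) mu) t₁
      = (-((z - w) / (mu - z))) • md (fun s => π (γ₁ s)) t₁ := by
    intro mu; rw [hw]; exact md_simpleElt z mu _ t₁
  have hmdπ2 : ∀ mu : ℂ, md (fun s => simpleElt z (π (γ₂ s)) mu) t₂
      = (-((z - w) / (mu - z))) • md (fun s => π (γ₂ s)) t₂ := by
    intro mu; rw [hw]; exact md_simpleElt z mu _ t₂
  have hmdπt1 : md (fun s => simpleElt z (πt (γ₁ s)) lam) t₁
      = (-((z - w) / (lam - z))) • md (fun s => πt (γ₁ s)) t₁ := by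
    rw [hw]; exact md_simpleElt z lam _ t₁
  have hmdπt2 : md (fun s => simpleElt z (πt (γ₂ s)) lam) t₂
      = (-((z - w) / (lam - z))) • md (fun s => πt (γ₂ s)) t₂ := by
    rw [hw]; exact md_simpleElt z lam _ t₂
  have hprojπ1 : md (fun s => π (γ₁ s)) t₁ * π p + π p * md (fun s => π (γ₁ s)) t₁
      = md (fun s => π (γ₁ s)) t₁ := by
    have h2 : md (fun s => π (γ₁ s) * π (γ₁ s)) t₁ = md (fun s => π (γ₁ s)) t₁ :=
      md_congr (fun s => hππ (γ₁ s)) t₁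
    rw [md_mul hdπ1 hdπ1, h₁] at h2
    exact h2
  have hprojP1 : md (fun s => πt (γ₁ s)) t₁ * πt p + πt p * md (fun s => πt (γ₁ s)) t₁
      = md (fun s => πt (γ₁ s)) t₁ := by
    have h2 : md (fun s => πt (γ₁ s) * πt (γ₁ s)) t₁ = md (fun s => πt (γ₁ s)) t₁ :=
      md_congr (fun s => hπtP (γ₁ s)) t₁
    rw [md_mul hdπt1 hdπt1, h₁] at h2
    exact h2
  have hprojP2 : md (fun s => πt (γ₂ s)) t₂ * πt p + πt p * md (fun s => πt (γ₂ s)) t₂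
      = md (fun s => πt (γ₂ s)) t₂ := by
    have h2 : md (fun s => πt (γ₂ s) * πt (γ₂ s)) t₂ = md (fun s => πt (γ₂ s)) t₂ :=
      md_congr (fun s => hπtP (γ₂ s)) t₂
    rw [md_mul hdπt2 hdπt2, h₂] at h2
    exact h2
  have hgw : simpleElt z (π p) w = π p := by
    rw [simpleElt, ← hw, hcw, neg_one_smul]
    abel
  have hμ2 : (2*z - w) ≠ z := by
    intro h; apply hzw
    have h' : z - w = (2*z - w) - z := by ring
    rw [h', h]; ring
  have hg2 : simpleElt z (π p) (2*z - w) = 1 + (1 - π p) := by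
    rw [simpleElt, ← hw, hc2, one_smul]
  have eqw : w • md (fun s => π (γ₁ s)) t₁ - md (fun s => π (γ₂ s)) t₂ = A₀ * π p := by
    have h := h0 w hwz
    rw [hmdπ1, hmdπ2, hgw, hcw] at h
    simp only [neg_neg, one_smul] at h
    exact h
  have eq2 : (2*z - w) • ((-1:ℂ) • md (fun s => π (γ₁ s)) t₁)
      - (-1:ℂ) • md (fun s => π (γ₂ s)) t₂ = A₀ * (1 + (1 - π p)) := by
    have h := h0 (2*z - w) hμ2
    rw [hmdπ1, hmdπ2, hg2, hc2] at h
    exact h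
  have hA₀v : A₀ = (w - z) • md (fun s => π (γ₁ s)) t₁ := alg_A0 eqw eq2
  have ha : z • md (fun s => π (γ₁ s)) t₁ - md (fun s => π (γ₂ s)) t₂
      = (z - w) • (π p * md (fun s => π (γ₁ s)) t₁) := alg_a eqw hA₀v hprojπ1
  have hdF1 : ∀ i j, DifferentiableAt ℝ (fun s => (ψ (γ₁ s) z * π (γ₁ s)) i j) t₁ :=
    diff_mul_entry hdz1 hdπ1
  have hdF2 : ∀ i j, DifferentiableAt ℝ (fun s => (ψ (γ₂ s) z * π (γ₂ s)) i j) t₂ :=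
    diff_mul_entry hdz2 hdπ2
  have hM1 : md (fun s => ψ (γ₁ s) z * π (γ₁ s)) t₁
      = md (fun s => ψ (γ₁ s) z) t₁ * π p + ψ p z * md (fun s => π (γ₁ s)) t₁ := by
    rw [md_mul hdz1 hdπ1, h₁]
  have hM2 : md (fun s => ψ (γ₂ s) z * π (γ₂ s)) t₂
      = md (fun s => ψ (γ₂ s) z) t₂ * π p + ψ p z * md (fun s => π (γ₂ s)) t₂ := by
    rw [md_mul hdz2 hdπ2, h₂]
  have hfd1 : md (fun s => πt (γ₁ s)) t₁ * (ψ p z * π p)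
      + πt p * md (fun s => ψ (γ₁ s) z * π (γ₁ s)) t₁
      = md (fun s => ψ (γ₁ s) z * π (γ₁ s)) t₁ := by
    have h2 : md (fun s => πt (γ₁ s) * (ψ (γ₁ s) z * π (γ₁ s))) t₁
        = md (fun s => ψ (γ₁ s) z * π (γ₁ s)) t₁ :=
      md_congr (fun s => hfix (γ₁ s)) t₁
    rw [md_mul hdπt1 hdF1, h₁] at h2
    exact h2
  have hfd2 : md (fun s => πt (γ₂ s)) t₂ * (ψ p z * π p)
      + πt p * md (fun s => ψ (γ₂ s) z * π (γ₂ s)) t₂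
      = md (fun s => ψ (γ₂ s) z * π (γ₂ s)) t₂ := by
    have h2 : md (fun s => πt (γ₂ s) * (ψ (γ₂ s) z * π (γ₂ s))) t₂
        = md (fun s => ψ (γ₂ s) z * π (γ₂ s)) t₂ :=
      md_congr (fun s => hfix (γ₂ s)) t₂
    rw [md_mul hdπt2 hdF2, h₂] at h2
    exact h2
  have hcombo : z • md (fun s => ψ (γ₁ s) z * π (γ₁ s)) t₁
      - md (fun s => ψ (γ₂ s) z * π (γ₂ s)) t₂
      = A * (ψ p z * π p) + (z - w) • ((ψ p z * π p) * md (fun s => π (γ₁ s)) t₁) := by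
    rw [hM1, hM2]
    exact alg_combo heqz ha
  have hstar : (z • md (fun s => πt (γ₁ s)) t₁ - md (fun s => πt (γ₂ s)) t₂
      - (1 - πt p) * A) * πt p = 0 :=
    hran _ (alg_star hfd1 hfd2 hcombo (hfix p))
  have hdw1' : ∀ i j, DifferentiableAt ℝ (fun s => (ψ (γ₁ s) w)ᴴ i j) t₁ :=
    fun i j => (hdw1 j i).star
  have hdw2' : ∀ i j, DifferentiableAt ℝ (fun s => (ψ (γ₂ s) w)ᴴ i j) t₂ :=
    fun i j => (hdw2 j i).star
  have hr1 : (md (fun s => ψ (γ₁ s) w) t₁)ᴴ * ψ p z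
      + (ψ p w)ᴴ * md (fun s => ψ (γ₁ s) z) t₁ = 0 := by
    have h2 : md (fun s => (ψ (γ₁ s) w)ᴴ * ψ (γ₁ s) z) t₁ = 0 := by
      rw [md_congr (fun s => hreal (γ₁ s)) t₁, md_const]
    rw [md_mul hdw1' hdz1, h₁, md_conjT] at h2
    exact h2
  have hr2 : (md (fun s => ψ (γ₂ s) w) t₂)ᴴ * ψ p z
      + (ψ p w)ᴴ * md (fun s => ψ (γ₂ s) z) t₂ = 0 := by
    have h2 : md (fun s => (ψ (γ₂ s) w)ᴴ * ψ (γ₂ s) z) t₂ = 0 := by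
      rw [md_congr (fun s => hreal (γ₂ s)) t₂, md_const]
    rw [md_mul hdw2' hdz2, h₂, md_conjT] at h2
    exact h2
  have hherm : z • (md (fun s => ψ (γ₁ s) w) t₁)ᴴ - (md (fun s => ψ (γ₂ s) w) t₂)ᴴ
      = (ψ p w)ᴴ * Aᴴ := by
    have h0' := congrArg Matrix.conjTranspose heqw
    rw [Matrix.conjTranspose_sub, Matrix.conjTranspose_smul, Matrix.conjTranspose_mul,
      hsw] at h0'
    exact h0'
  have hAH : Aᴴ = -A := by
    have h := alg_AH hr1 hr2 hherm heqz
    have h2 : (Aᴴ + A) * ψ p z = 0 := unit_cancel_left (isUnit_conjT hinvw) h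
    have h3 : Aᴴ + A = 0 := unit_cancel_right hinvz h2
    exact eq_neg_of_add_eq_zero_left h3
  have hD1H : (md (fun s => πt (γ₁ s)) t₁)ᴴ = md (fun s => πt (γ₁ s)) t₁ := by
    rw [← md_conjT]
    exact md_congr (fun s => hπtH (γ₁ s)) t₁
  have hD2H : (md (fun s => πt (γ₂ s)) t₂)ᴴ = md (fun s => πt (γ₂ s)) t₂ := by
    rw [← md_conjT]
    exact md_congr (fun s => hπtH (γ₂ s)) t₂
  have hstar2 : (w • md (fun s => πt (γ₁ s)) t₁ - md (fun s => πt (γ₂ s)) t₂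
      + πt p * A) * (1 - πt p) = 0 :=
    alg_star2 hsz hstar hD1H hD2H (hπtH p) hAH hprojP1 hprojP2
  have hE1 : (w - z) • (md (fun s => πt (γ₁ s)) t₁ * (1 - πt p))
      + z • md (fun s => πt (γ₁ s)) t₁ - md (fun s => πt (γ₂ s)) t₂
      - A * πt p + πt p * A = 0 := alg_E1 hstar hstar2
  have hGdef : simpleElt z (πt p) lam = 1 + ((z - w)/(lam - z)) • (1 - πt p) := by
    rw [simpleElt, ← hw]
  have hdg1 : ∀ i j, DifferentiableAt ℝ (fun s => simpleElt z (πt (γ₁ s)) lam i j) t₁ := by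
    intro i j
    simp only [simpleElt, Matrix.add_apply, Matrix.smul_apply, Matrix.sub_apply, smul_eq_mul]
    exact (((hdπt1 i j).const_sub _).const_mul _).const_add _
  have hdg2 : ∀ i j, DifferentiableAt ℝ (fun s => simpleElt z (πt (γ₂ s)) lam i j) t₂ := by
    intro i j
    simp only [simpleElt, Matrix.add_apply, Matrix.smul_apply, Matrix.sub_apply, smul_eq_mul]
    exact (((hdπt2 i j).const_sub _).const_mul _).const_add _
  have hL1 : md (fun s => simpleElt z (πt (γ₁ s)) lam * ψ (γ₁ s) lam) t₁
      = (-((z - w)/(lam - z))) • md (fun s => πt (γ₁ s)) t₁ * ψ p lam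
        + simpleElt z (πt p) lam * md (fun s => ψ (γ₁ s) lam) t₁ := by
    rw [md_mul hdg1 hdlam1, h₁, hmdπt1]
  have hL2 : md (fun s => simpleElt z (πt (γ₂ s)) lam * ψ (γ₂ s) lam) t₂
      = (-((z - w)/(lam - z))) • md (fun s => πt (γ₂ s)) t₂ * ψ p lam
        + simpleElt z (πt p) lam * md (fun s => ψ (γ₂ s) lam) t₂ := by
    rw [md_mul hdg2 hdlam2, h₂, hmdπt2]
  have hkey := alg_final (D1 := md (fun s => πt (γ₁ s)) t₁)
    (D2 := md (fun s => πt (γ₂ s)) t₂) (P := πt p) (A := A) hlamz hE1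
  rw [hL1, hL2, hGdef]
  calc lam • ((-((z - w)/(lam - z))) • md (fun s => πt (γ₁ s)) t₁ * ψ p lam
          + (1 + ((z - w)/(lam - z)) • (1 - πt p)) * md (fun s => ψ (γ₁ s) lam) t₁)
      - ((-((z - w)/(lam - z))) • md (fun s => πt (γ₂ s)) t₂ * ψ p lam
          + (1 + ((z - w)/(lam - z)) • (1 - πt p)) * md (fun s => ψ (γ₂ s) lam) t₂)
      = ((-(lam * ((z - w)/(lam - z)))) • md (fun s => πt (γ₁ s)) t₁
          + ((z - w)/(lam - z)) • md (fun s => πt (γ₂ s)) t₂) * ψ p lam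
        + (1 + ((z - w)/(lam - z)) • (1 - πt p))
          * (lam • md (fun s => ψ (γ₁ s) lam) t₁ - md (fun s => ψ (γ₂ s) lam) t₂) := by
        simp only [Matrix.add_mul, Matrix.mul_sub, Matrix.mul_add, smul_add, smul_mul_assoc,
          mul_smul_comm, smul_smul, neg_smul, smul_sub, Matrix.sub_mul, Matrix.one_mul,
          Matrix.mul_one, Matrix.neg_mul, neg_neg]
        module
    _ = ((-(lam * ((z - w)/(lam - z)))) • md (fun s => πt (γ₁ s)) t₁
          + ((z - w)/(lam - z)) • md (fun s => πt (γ₂ s)) t₂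
          + (1 + ((z - w)/(lam - z)) • (1 - πt p)) * A) * ψ p lam := by
        rw [heqlam]
        simp only [Matrix.add_mul, Matrix.mul_assoc]
        try abel
    _ = ((A + (w - z) • md (fun s => πt (γ₁ s)) t₁)
          * (1 + ((z - w)/(lam - z)) • (1 - πt p))) * ψ p lam := by
        rw [hkey]
    _ = (A + (w - z) • md (fun s => πt (γ₁ s)) t₁)
          * ((1 + ((z - w)/(lam - z)) • (1 - πt p)) * ψ p lam) := by
        rw [Matrix.mul_assoc]

end BTaux

/-- Algebraic Bäcklund transformation (Theorem 3.1(2)): if ψ is an extended solution with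
λψ_x − ψ_u = Aψ, λψ_v − ψ_x = Bψ, g_{z,π} is an extended 1-soliton, and π̃(p) is the
Hermitian projection onto ψ(p,z)(range π(p)), then ψ₁ = g_{z,π̃}ψ satisfies the linear
system with coefficients (A + (conj z − z)∂_xπ̃, B + (conj z − z)∂_vπ̃). -/
theorem statement10 {n : ℕ} (hn : 1 ≤ n) (z : ℂ) (hz : z.im ≠ 0)
    (Ω : Set ℂ) (hΩ : IsOpen Ω) (hzΩ : z ∈ Ω) (hzcΩ : (starRingEnd ℂ) z ∈ Ω)
    (ψ : ℝ × ℝ × ℝ → ℂ → Matrix (Fin n) (Fin n) ℂ)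
    (hinv : ∀ p, ∀ lam ∈ Ω, IsUnit (ψ p lam))
    (hC1 : ∀ lam ∈ Ω, ∀ i j, ContDiff ℝ 1 (fun p => ψ p lam i j))
    (hhol : ∀ p i j, DifferentiableOn ℂ (fun lam => ψ p lam i j) Ω)
    (hreal : ∀ p, ∀ lam ∈ Ω, (starRingEnd ℂ) lam ∈ Ω →
      (ψ p ((starRingEnd ℂ) lam))ᴴ * ψ p lam = 1)
    (A B : ℝ × ℝ × ℝ → Matrix (Fin n) (Fin n) ℂ)
    (hA : ∀ p, ∀ lam ∈ Ω,
      lam • pdx (fun q => ψ q lam) p - pdu (fun q => ψ q lam) p = A p * ψ p lam)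
    (hB : ∀ p, ∀ lam ∈ Ω,
      lam • pdv (fun q => ψ q lam) p - pdx (fun q => ψ q lam) p = B p * ψ p lam)
    (π : ℝ × ℝ × ℝ → Matrix (Fin n) (Fin n) ℂ)
    (hπ : ∀ p, IsHermitianProj (π p))
    (hπC1 : ∀ i j, ContDiff ℝ 1 (fun p => π p i j))
    (A₀ B₀ : ℝ × ℝ × ℝ → Matrix (Fin n) (Fin n) ℂ)
    (hA₀ : ∀ p lam, lam ≠ z →
      lam • pdx (fun q => simpleElt z (π q) lam) p - pdu (fun q => simpleElt z (π q) lam) p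
        = A₀ p * simpleElt z (π p) lam)
    (hB₀ : ∀ p lam, lam ≠ z →
      lam • pdv (fun q => simpleElt z (π q) lam) p - pdx (fun q => simpleElt z (π q) lam) p
        = B₀ p * simpleElt z (π p) lam)
    (πt : ℝ × ℝ × ℝ → Matrix (Fin n) (Fin n) ℂ)
    (hπt : ∀ p, IsHermitianProj (πt p))
    (hπtC1 : ∀ i j, ContDiff ℝ 1 (fun p => πt p i j))
    (hπtr : ∀ p, mrange (πt p) = (mrange (π p)).map (Matrix.toEuclideanLin (ψ p z))) :
    ∀ p, ∀ lam ∈ Ω, lam ≠ z →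
      (lam • pdx (fun q => simpleElt z (πt q) lam * ψ q lam) p
          - pdu (fun q => simpleElt z (πt q) lam * ψ q lam) p
        = (A p + ((starRingEnd ℂ) z - z) • pdx πt p)
            * (simpleElt z (πt p) lam * ψ p lam)) ∧
      (lam • pdv (fun q => simpleElt z (πt q) lam * ψ q lam) p
          - pdx (fun q => simpleElt z (πt q) lam * ψ q lam) p
        = (B p + ((starRingEnd ℂ) z - z) • pdv πt p)
            * (simpleElt z (πt p) lam * ψ p lam)) := by
  intro p lam hmem hne
  have hfix : ∀ q, πt q * (ψ q z * π q) = ψ q z * π q := by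
    intro q
    refine BTaux.proj_fix (hπt q).2 (le_of_eq ?_)
    rw [BTaux.mrange_mul, ← hπtr q]
  have hran : ∀ X : Matrix (Fin n) (Fin n) ℂ, X * (ψ p z * π p) = 0 → X * πt p = 0 := by
    intro X hX
    refine BTaux.range_kill (le_of_eq ?_) hX
    rw [hπtr p, BTaux.mrange_mul]
  have hreal' : ∀ q, (ψ q ((starRingEnd ℂ) z))ᴴ * ψ q z = 1 := fun q => hreal q z hzΩ hzcΩ
  have hψx : ∀ mu ∈ Ω, ∀ (a b t : ℝ), ∀ i j,
      DifferentiableAt ℝ (fun s => ψ (s, a, b) mu i j) t :=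
    fun mu hmu a b t i j => BTaux.diffAt_line1 (hC1 mu hmu i j) a b t
  have hψu : ∀ mu ∈ Ω, ∀ (a b t : ℝ), ∀ i j,
      DifferentiableAt ℝ (fun s => ψ (a, s, b) mu i j) t :=
    fun mu hmu a b t i j => BTaux.diffAt_line2 (hC1 mu hmu i j) a b t
  have hψv : ∀ mu ∈ Ω, ∀ (a b t : ℝ), ∀ i j,
      DifferentiableAt ℝ (fun s => ψ (a, b, s) mu i j) t :=
    fun mu hmu a b t i j => BTaux.diffAt_line3 (hC1 mu hmu i j) a b t
  have hπx : ∀ (a b t : ℝ), ∀ i j, DifferentiableAt ℝ (fun s => π (s, a, b) i j) t :=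
    fun a b t i j => BTaux.diffAt_line1 (hπC1 i j) a b t
  have hπu : ∀ (a b t : ℝ), ∀ i j, DifferentiableAt ℝ (fun s => π (a, s, b) i j) t :=
    fun a b t i j => BTaux.diffAt_line2 (hπC1 i j) a b t
  have hπv : ∀ (a b t : ℝ), ∀ i j, DifferentiableAt ℝ (fun s => π (a, b, s) i j) t :=
    fun a b t i j => BTaux.diffAt_line3 (hπC1 i j) a b t
  have hπtx : ∀ (a b t : ℝ), ∀ i j, DifferentiableAt ℝ (fun s => πt (s, a, b) i j) t :=
    fun a b t i j => BTaux.diffAt_line1 (hπtC1 i j) a b t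
  have hπtu : ∀ (a b t : ℝ), ∀ i j, DifferentiableAt ℝ (fun s => πt (a, s, b) i j) t :=
    fun a b t i j => BTaux.diffAt_line2 (hπtC1 i j) a b t
  have hπtv : ∀ (a b t : ℝ), ∀ i j, DifferentiableAt ℝ (fun s => πt (a, b, s) i j) t :=
    fun a b t i j => BTaux.diffAt_line3 (hπtC1 i j) a b t
  constructor
  · exact BTaux.half z lam hz hne
      (fun s => (s, p.2.1, p.2.2)) (fun s => (p.1, s, p.2.2)) p.1 p.2.1 p rfl rfl
      ψ π πt (A p) (A₀ p)
      (hψx lam hmem _ _ _) (hψu lam hmem _ _ _)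
      (hψx z hzΩ _ _ _) (hψu z hzΩ _ _ _)
      (hψx _ hzcΩ _ _ _) (hψu _ hzcΩ _ _ _)
      (hπx _ _ _) (hπu _ _ _)
      (hπtx _ _ _) (hπtu _ _ _)
      (hA p lam hmem) (hA p z hzΩ) (hA p _ hzcΩ)
      (fun mu hmu => hA₀ p mu hmu)
      (fun q => (hπ q).2) (fun q => (hπt q).2) (fun q => (hπt q).1)
      hfix hran hreal' (hinv p z hzΩ) (hinv p _ hzcΩ)
  · exact BTaux.half z lam hz hne
      (fun s => (p.1, p.2.1, s)) (fun s => (s, p.2.1, p.2.2)) p.2.2 p.1 p rfl rfl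
      ψ π πt (B p) (B₀ p)
      (hψv lam hmem _ _ _) (hψx lam hmem _ _ _)
      (hψv z hzΩ _ _ _) (hψx z hzΩ _ _ _)
      (hψv _ hzcΩ _ _ _) (hψx _ hzcΩ _ _ _)
      (hπv _ _ _) (hπx _ _ _)
      (hπtv _ _ _) (hπtx _ _ _)
      (hB p lam hmem) (hB p z hzΩ) (hB p _ hzcΩ)
      (fun mu hmu => hB₀ p mu hmu)
      (fun q => (hπ q).2) (fun q => (hπt q).2) (fun q => (hπt q).1)
      hfix hran hreal' (hinv p z hzΩ) (hinv p _ hzcΩ)
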